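/- For every integer m ≥ 2 and every ε > 0 there exists a simple closed polygon with exactly 2m+1 vertices in EuclideanSpace ℝ (Fin 3) whose total curvature Σ_{i=0}^{2m} angle(v_{i+1} − v_i, v_{i+2} − v_{i+1}) (indices mod 2m+1) is strictly greater than 2mπ − ε. In other words, the bound 2mπ for the total curvature of a piecewise geodesic Jordan curve with 2m+1 vertices is sharp. -/

import Mathlib

open Real InnerProductGeometry
open scoped RealInnerProductSpace

/-- A closed polygon with vertices `v i` (indices cyclic, consecutive vertices distinct)
is simple (a piecewise geodesic Jordan curve) if any two consecutive edges meet exactly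
in their common vertex and any two non-consecutive edges are disjoint. -/
def IsSimpleClosedPolygon {k n : ℕ} (v : ZMod k → EuclideanSpace ℝ (Fin n)) : Prop :=
  (∀ i, v (i + 1) ≠ v i) ∧
  (∀ i, segment ℝ (v i) (v (i + 1)) ∩ segment ℝ (v (i + 1)) (v (i + 2)) = {v (i + 1)}) ∧
  (∀ i j, i ≠ j → i + 1 ≠ j → i ≠ j + 1 →
    Disjoint (segment ℝ (v i) (v (i + 1))) (segment ℝ (v j) (v (j + 1))))

namespace TotalCurvatureSharpAux

noncomputable def E3 (a b c : ℝ) : EuclideanSpace ℝ (Fin 3) := WithLp.toLp 2 ![a, b, c]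

lemma E3_sub (a b c a' b' c' : ℝ) : E3 a b c - E3 a' b' c' = E3 (a-a') (b-b') (c-c') := by
  ext i; fin_cases i <;> simp [E3]

lemma E3_congr {x y z x' y' z' : ℝ} (hx : x = x') (hy : y = y') (hz : z = z') :
    E3 x y z = E3 x' y' z' := by rw [hx, hy, hz]

lemma inner_E3 (a b c a' b' c' : ℝ) : ⟪E3 a b c, E3 a' b' c'⟫ = a*a' + b*b' + c*c' := by
  simp [E3, PiLp.inner_apply, RCLike.inner_apply, Fin.sum_univ_three]; ring

lemma normsq_E3 (a b c : ℝ) : ‖E3 a b c‖^2 = a^2 + b^2 + c^2 := by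
  rw [← real_inner_self_eq_norm_sq, inner_E3]; ring

lemma seg_coord {u w p : EuclideanSpace ℝ (Fin 3)} (h : p ∈ segment ℝ u w) (t : Fin 3) :
    ∃ α β : ℝ, 0 ≤ α ∧ 0 ≤ β ∧ α + β = 1 ∧ p t = α * u t + β * w t := by
  obtain ⟨α, β, hα, hβ, hαβ, rfl⟩ := h
  exact ⟨α, β, hα, hβ, hαβ, by simp⟩

lemma seg_inter {u w x : EuclideanSpace ℝ (Fin 3)}
    (h : ∀ s t : ℝ, s • (w - u) + t • (x - w) = 0 → s = 0 ∧ t = 0) :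
    segment ℝ u w ∩ segment ℝ w x = {w} := by
  ext p
  constructor
  · rintro ⟨h1, h2⟩
    obtain ⟨a, b, ha, hb, hab, rfl⟩ := h1
    obtain ⟨a', b', ha', hb', hab', he⟩ := h2
    have hb1 : b = 1 - a := by linarith
    have ha1 : a' = 1 - b' := by linarith
    subst hb1 ha1
    have key : (-a) • (w - u) + (-b') • (x - w) = 0 := by
      linear_combination (norm := module) -he
    obtain ⟨h1, h2⟩ := h _ _ key
    have ha0 : a = 0 := by linarith
    subst ha0
    simp
  · intro hp
    rw [Set.mem_singleton_iff] at hp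
    subst hp
    exact ⟨right_mem_segment _ _ _, left_mem_segment _ _ _⟩

lemma endangle {u w : EuclideanSpace ℝ (Fin 3)} (h : ⟪u, w⟫ < 0) : π / 2 < angle u w := by
  have hprod : 0 < ‖u‖ * ‖w‖ := by
    rcases lt_or_ge 0 (‖u‖ * ‖w‖) with h'|h'
    · exact h'
    · exfalso
      have h1 := abs_real_inner_le_norm u w
      have h2 : |⟪u, w⟫| ≤ 0 := le_trans h1 h'
      have h3 : ⟪u, w⟫ = 0 := abs_nonpos_iff.mp h2
      linarith
  have ht : ⟪u, w⟫ / (‖u‖ * ‖w‖) < 0 := div_neg_of_neg_of_pos h hprod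
  rw [angle]
  by_contra hle
  push_neg at hle
  rw [Real.arccos_le_pi_div_two] at hle
  linarith

lemma goodangle {u w : EuclideanSpace ℝ (Fin 3)} {c : ℝ} (hc0 : 0 < c) (hcpi : c ≤ π)
    (ht : ⟪u, w⟫ / (‖u‖ * ‖w‖) ≤ Real.cos (π - c)) : π - c ≤ angle u w := by
  rw [angle]
  have h1 : Real.arccos (Real.cos (π - c)) ≤ Real.arccos (⟪u, w⟫ / (‖u‖ * ‖w‖)) := by
    unfold Real.arccos
    have := Real.monotone_arcsin ht
    linarith
  rwa [Real.arccos_cos (by linarith) (by linarith)] at h1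

lemma angmain {c η r : ℝ} (hc0 : 0 < c) (hcπ : c ≤ π) (hη : η = 1 - Real.cos c)
    (hη0 : 0 < η) (hη1 : η ≤ 1) (hr2 : r^2 = η/16)
    (x0 y0 y1 : ℝ) (hx : x0^2 = 1) (hy : y0*y1 = 0) (hy0 : y0^2 ≤ r^2) (hy1 : y1^2 ≤ r^2) :
    π - c ≤ angle (E3 x0 y0 r) (E3 (-x0) y1 r) := by
  have hiu : ⟪E3 x0 y0 r, E3 (-x0) y1 r⟫ = r^2 - 1 := by
    rw [inner_E3]; linear_combination -hx + hy
  have hr1 : r^2 < 1 := by nlinarith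
  have hnu : ‖E3 x0 y0 r‖^2 ≤ 1 + 2*r^2 := by rw [normsq_E3]; nlinarith
  have hnw : ‖E3 (-x0) y1 r‖^2 ≤ 1 + 2*r^2 := by rw [normsq_E3]; nlinarith
  set u := E3 x0 y0 r
  set w := E3 (-x0) y1 r
  have hD0 : 0 < ‖u‖ * ‖w‖ := by
    have habs := abs_real_inner_le_norm u w
    rw [hiu] at habs
    have h1 : |r^2 - 1| = 1 - r^2 := by rw [abs_of_nonpos (by linarith)]; ring
    rw [h1] at habs
    linarith
  have hD1 : ‖u‖ * ‖w‖ ≤ 1 + 2*r^2 := by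
    nlinarith [norm_nonneg u, norm_nonneg w, hnu, hnw]
  apply goodangle hc0 hcπ
  rw [hiu, Real.cos_pi_sub, div_le_iff₀ hD0]
  have hkey : (1 - η) * (‖u‖ * ‖w‖) ≤ (1-η) * (1 + 2*r^2) :=
    mul_le_mul_of_nonneg_left hD1 (by linarith)
  nlinarith [hkey]

noncomputable def pv (m : ℕ) (r : ℝ) (j : ℕ) : EuclideanSpace ℝ (Fin 3) :=
  E3 (if j % 2 = 1 then 1 else 0) (if j = 0 ∨ j = 2*m then -r else 0) (j * r)

lemma pv_apply1 (m : ℕ) (r : ℝ) (j : ℕ) :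
    (pv m r j) 1 = if j = 0 ∨ j = 2*m then -r else 0 := rfl

lemma pv_apply2 (m : ℕ) (r : ℝ) (j : ℕ) : (pv m r j) 2 = j * r := rfl

lemma pv_ne {m : ℕ} {r : ℝ} (hr : 0 < r) {a b : ℕ} (hab : a ≠ b) : pv m r a ≠ pv m r b := by
  intro h
  have h2 := congrArg (fun v : EuclideanSpace ℝ (Fin 3) => v 2) h
  rw [pv_apply2, pv_apply2] at h2
  have : (a : ℝ) = b := mul_right_cancel₀ hr.ne' h2
  exact hab (by exact_mod_cast this)

lemma edge_eval (m : ℕ) (hm : 2 ≤ m) (r : ℝ) (a : ℕ) (ha : a ≤ 2*m-1) :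
    pv m r (a+1) - pv m r a =
      E3 (if a % 2 = 0 then 1 else -1)
         ((if a = 0 then r else 0) + (if a = 2*m-1 then -r else 0)) r := by
  rw [pv, pv, E3_sub]
  apply E3_congr
  · rcases Nat.mod_two_eq_zero_or_one a with h|h
    · simp [h, show (a+1) % 2 = 1 by omega]
    · simp [h, show ¬ (a+1) % 2 = 1 by omega]
  · by_cases h0 : a = 0
    · subst h0
      simp [show ¬ (1 = 2*m) by omega, show ¬ (0 = 2*m) by omega, show (0:ℕ) ≠ 2*m-1 by omega]
    · by_cases h1 : a = 2*m-1
      · simp [h0, h1, show 2*m-1+1 = 2*m by omega, show ¬ (2*m-1 = 0) by omega,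
          show ¬ (2*m-1 = 2*m) by omega]
      · simp [h0, h1, show ¬ (a+1 = 0) by omega, show ¬ (a+1 = 2*m) by omega,
          show ¬ (a = 2*m) by omega]
  · push_cast; ring

lemma edge_close (m : ℕ) (hm : 2 ≤ m) (r : ℝ) :
    pv m r 0 - pv m r (2*m) = E3 0 0 (-(2*m*r)) := by
  rw [pv, pv, E3_sub]
  apply E3_congr
  · simp [show (2*m) % 2 = 0 by omega]
  · simp
  · push_cast; ring

lemma ydisj (m : ℕ) (hm : 2 ≤ m) (r : ℝ) (hr : 0 < r) (b : ℕ) (hb1 : 1 ≤ b) (hb2 : b ≤ 2*m-2) :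
    Disjoint (segment ℝ (pv m r (2*m)) (pv m r 0)) (segment ℝ (pv m r b) (pv m r (b+1))) := by
  rw [Set.disjoint_left]
  intro p hp hq
  obtain ⟨α, β, hα, hβ, hαβ, h1⟩ := seg_coord hp 1
  obtain ⟨α', β', hα', hβ', hαβ', h2⟩ := seg_coord hq 1
  rw [pv_apply1, pv_apply1] at h1
  rw [pv_apply1, pv_apply1] at h2
  rw [if_pos (by omega), if_pos (by omega)] at h1
  rw [if_neg (by omega), if_neg (by omega)] at h2
  have : p 1 = -r := by rw [h1]; ring_nf; linear_combination (-r) * hαβ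
  have h2' : p 1 = 0 := by rw [h2]; ring
  linarith

lemma zdisj (m : ℕ) (r : ℝ) (hr : 0 < r) (a b : ℕ) (hab : a + 2 ≤ b) :
    Disjoint (segment ℝ (pv m r a) (pv m r (a+1))) (segment ℝ (pv m r b) (pv m r (b+1))) := by
  rw [Set.disjoint_left]
  intro p hp hq
  obtain ⟨α, β, hα, hβ, hαβ, h1⟩ := seg_coord hp 2
  obtain ⟨α', β', hα', hβ', hαβ', h2⟩ := seg_coord hq 2
  rw [pv_apply2, pv_apply2] at h1
  rw [pv_apply2, pv_apply2] at h2
  have hcast : (a:ℝ) + 2 ≤ (b:ℝ) := by exact_mod_cast hab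
  have hbb : β = 1 - α := by linarith
  have hbb' : β' = 1 - α' := by linarith
  rw [hbb] at h1; rw [hbb'] at h2
  have hup : p 2 ≤ ((a:ℝ)+1) * r := by
    rw [h1]; push_cast
    nlinarith [mul_nonneg hα (le_of_lt hr)]
  have hlo : ((b:ℝ)) * r ≤ p 2 := by
    rw [h2]; push_cast
    nlinarith [mul_nonneg (by linarith : (0:ℝ) ≤ 1 - α') (le_of_lt hr)]
  nlinarith [mul_lt_mul_of_pos_right (by linarith : (a:ℝ)+1 < (b:ℝ)) hr]

lemma indep_pm {r : ℝ} (hr : 0 < r) (x0 y0 y1 : ℝ) (hx : x0 = 1 ∨ x0 = -1) :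
    ∀ s t : ℝ, s • E3 x0 y0 r + t • E3 (-x0) y1 r = 0 → s = 0 ∧ t = 0 := by
  intro s t hst
  have h0 := congrArg (fun v : EuclideanSpace ℝ (Fin 3) => v 0) hst
  have h2 := congrArg (fun v : EuclideanSpace ℝ (Fin 3) => v 2) hst
  simp [E3] at h0 h2
  have hsum : (s + t) * r = 0 := by linear_combination h2
  have hst' : s + t = 0 := by
    rcases mul_eq_zero.mp hsum with h|h
    · exact h
    · exact absurd h hr.ne'
  rcases hx with h|h <;> subst h <;> constructor <;> nlinarith [h0, hst']


lemma edge0 (m : ℕ) (hm : 2 ≤ m) (r : ℝ) : pv m r 1 - pv m r 0 = E3 1 r r := by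
  have h := edge_eval m hm r 0 (by omega)
  simpa [show ¬ ((0:ℕ) = 2*m-1) by omega] using h

lemma edgeLast (m : ℕ) (hm : 2 ≤ m) (r : ℝ) :
    pv m r (2*m) - pv m r (2*m-1) = E3 (-1) (-r) r := by
  have h := edge_eval m hm r (2*m-1) (by omega)
  rw [show 2*m-1+1 = 2*m by omega] at h
  simpa [show ¬ ((2*m-1) % 2 = 0) by omega, show ¬ (2*m-1 = 0) by omega] using h

lemma angle_mid (m : ℕ) (hm : 2 ≤ m) {c η r : ℝ} (hc0 : 0 < c) (hcπ : c ≤ π)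
    (hη : η = 1 - Real.cos c) (hη0 : 0 < η) (hη1 : η ≤ 1) (hr2 : r^2 = η/16) (hr0 : 0 < r)
    (a : ℕ) (ha : a ≤ 2*m-2) :
    π - c ≤ angle (pv m r (a+1) - pv m r a) (pv m r (a+2) - pv m r (a+1)) := by
  by_cases h0 : a = 0
  · subst h0
    show π - c ≤ angle (pv m r 1 - pv m r 0) (pv m r 2 - pv m r 1)
    have hw := edge_eval m hm r 1 (by omega)
    rw [show (1:ℕ)+1 = 2 from rfl] at hw
    simp only [show ¬ ((1:ℕ) % 2 = 0) by omega, if_false, show ¬ ((1:ℕ) = 0) by omega,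
      show ¬ ((1:ℕ) = 2*m-1) by omega, if_false, add_zero, zero_add] at hw
    rw [edge0 m hm r, hw]
    exact angmain hc0 hcπ hη hη0 hη1 hr2 1 r 0 (by norm_num) (by ring) (le_refl _)
      (by nlinarith [sq_nonneg r])
  · by_cases h1 : a = 2*m-2
    · subst h1
      have hu := edge_eval m hm r (2*m-2) (by omega)
      simp only [show (2*m-2) % 2 = 0 by omega, if_true, show ¬ (2*m-2 = 0) by omega,
        show ¬ (2*m-2 = 2*m-1) by omega, if_false, add_zero, if_pos] at hu
      rw [show 2*m-2+2 = (2*m-1)+1 by omega]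
      rw [show 2*m-2+1 = 2*m-1 by omega] at hu ⊢
      have hw := edge_eval m hm r (2*m-1) (by omega)
      simp only [show ¬ ((2*m-1) % 2 = 0) by omega, if_false, show ¬ (2*m-1 = 0) by omega,
        if_pos rfl, zero_add] at hw
      rw [hu, hw]
      exact angmain hc0 hcπ hη hη0 hη1 hr2 1 0 (-r) (by norm_num) (by ring)
        (by nlinarith [sq_nonneg r]) (by nlinarith [sq_nonneg r])
    · have hu := edge_eval m hm r a (by omega)
      have hw := edge_eval m hm r (a+1) (by omega)
      rw [show a+1+1 = a+2 by omega] at hw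
      simp only [h0, if_false, show ¬ (a = 2*m-1) by omega, if_false, add_zero,
        show ¬ (a+1 = 0) by omega, show ¬ (a+1 = 2*m-1) by omega, zero_add] at hu hw
      rcases Nat.mod_two_eq_zero_or_one a with hp|hp
      · rw [if_pos hp] at hu
        rw [if_neg (show ¬ ((a+1) % 2 = 0) by omega)] at hw
        rw [hu, hw]
        exact angmain hc0 hcπ hη hη0 hη1 hr2 1 0 0 (by norm_num) (by ring)
          (by nlinarith [sq_nonneg r]) (by nlinarith [sq_nonneg r])
      · rw [if_neg (show ¬ (a % 2 = 0) by omega)] at hu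
        rw [if_pos (show (a+1) % 2 = 0 by omega)] at hw
        rw [hu, hw]
        have key := angmain hc0 hcπ hη hη0 hη1 hr2 (-1) 0 0 (by norm_num) (by ring)
          (by nlinarith [sq_nonneg r]) (by nlinarith [sq_nonneg r])
        rw [show -(-1:ℝ) = 1 by norm_num] at key
        exact key

lemma angle_end1 (m : ℕ) (hm : 2 ≤ m) {r : ℝ} (hr0 : 0 < r) :
    π/2 < angle (pv m r (2*m) - pv m r (2*m-1)) (pv m r 0 - pv m r (2*m)) := by
  rw [edgeLast m hm r, edge_close m hm r]
  apply endangle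
  rw [inner_E3]
  have hm' : (0:ℝ) < (m:ℝ) := by exact_mod_cast (by omega : 0 < m)
  nlinarith [mul_pos hr0 hr0]

lemma angle_end2 (m : ℕ) (hm : 2 ≤ m) {r : ℝ} (hr0 : 0 < r) :
    π/2 < angle (pv m r 0 - pv m r (2*m)) (pv m r 1 - pv m r 0) := by
  rw [edge0 m hm r, edge_close m hm r]
  apply endangle
  rw [inner_E3]
  have hm' : (0:ℝ) < (m:ℝ) := by exact_mod_cast (by omega : 0 < m)
  nlinarith [mul_pos hr0 hr0]

noncomputable def Gf (m : ℕ) (r : ℝ) (a : ℕ) : ℝ :=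
  angle (pv m r ((a+1) % (2*m+1)) - pv m r (a % (2*m+1)))
        (pv m r ((a+2) % (2*m+1)) - pv m r ((a+1) % (2*m+1)))

end TotalCurvatureSharpAux

open TotalCurvatureSharpAux

/-- Sharpness of the bound `2mπ`: for every `m ≥ 2` and `ε > 0` there is a
piecewise geodesic Jordan curve with `2m+1` vertices in `ℝ³` of total curvature
greater than `2mπ - ε`. -/
theorem total_curvature_gamma_odd_sharp (m : ℕ) (hm : 2 ≤ m) (ε : ℝ) (hε : 0 < ε) :
    ∃ v : ZMod (2 * m + 1) → EuclideanSpace ℝ (Fin 3),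
      IsSimpleClosedPolygon v ∧
      2 * m * Real.pi - ε <
        ∑ i : ZMod (2 * m + 1), angle (v (i + 1) - v i) (v (i + 2) - v (i + 1)) := by
  haveI : NeZero (2*m+1) := ⟨by omega⟩
  -- choose the parameters
  set c : ℝ := min (ε / (2*m)) 1 with hc_def
  have hc0 : 0 < c := lt_min (div_pos hε (by positivity)) one_pos
  have hc1 : c ≤ 1 := min_le_right _ _
  have hcε : c ≤ ε / (2*m) := min_le_left _ _
  have hπ3 : (3:ℝ) < π := Real.pi_gt_three
  have hcπ : c ≤ π := by linarith
  set η : ℝ := 1 - Real.cos c with hη_def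
  have hη0 : 0 < η := by
    have h1 : Real.cos c < Real.cos 0 := by
      refine Real.strictAntiOn_cos (Set.mem_Icc.mpr ⟨le_rfl, Real.pi_pos.le⟩)
        (Set.mem_Icc.mpr ⟨hc0.le, hcπ⟩) hc0
    rw [Real.cos_zero] at h1
    simp only [hη_def]; linarith
  have hη1 : η ≤ 1 := by
    have : 0 ≤ Real.cos c := Real.cos_nonneg_of_mem_Icc ⟨by linarith, by linarith⟩
    simp only [hη_def]; linarith
  set r : ℝ := Real.sqrt η / 4 with hr_def
  have hr0 : 0 < r := by positivity
  have hr2 : r^2 = η/16 := by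
    rw [hr_def, div_pow, Real.sq_sqrt hη0.le]; norm_num
  set n : ℕ := 2*m+1 with hn_def
  -- the polygon
  -- basic index facts
  have hvlt : ∀ i : ZMod (2*m+1), i.val < 2*m+1 := fun i => ZMod.val_lt i
  have hcastv : ∀ x : ZMod (2*m+1), ((x.val : ℕ) : ZMod (2*m+1)) = x :=
    fun x => ZMod.natCast_zmod_val x
  have hval1 : ∀ i : ZMod (2*m+1), (i + 1).val = (i.val + 1) % (2*m+1) := by
    intro i
    have h1 : i + 1 = ((i.val + 1 : ℕ) : ZMod (2*m+1)) := by push_cast; rw [hcastv i]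
    rw [h1, ZMod.val_natCast]
  have hval2 : ∀ i : ZMod (2*m+1), (i + 2).val = (i.val + 2) % (2*m+1) := by
    intro i
    have h1 : i + 2 = ((i.val + 2 : ℕ) : ZMod (2*m+1)) := by push_cast; rw [hcastv i]
    rw [h1, ZMod.val_natCast]
  refine ⟨fun i => pv m r i.val, ⟨?_, ?_, ?_⟩, ?_⟩
  · -- consecutive vertices distinct
    intro i
    show pv m r (i+1).val ≠ pv m r i.val
    rw [hval1 i]
    apply pv_ne hr0
    have ha := hvlt i
    by_cases h : i.val = 2*m
    · rw [h, show (2*m+1) % (2*m+1) = 0 from Nat.mod_self _]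
      omega
    · rw [Nat.mod_eq_of_lt (by omega)]
      omega
  · -- consecutive edges meet exactly at the common vertex
    intro i
    show segment ℝ (pv m r i.val) (pv m r (i+1).val) ∩
        segment ℝ (pv m r (i+1).val) (pv m r (i+2).val) = {pv m r (i+1).val}
    rw [hval1 i, hval2 i]
    have ha := hvlt i
    apply seg_inter
    by_cases hA : i.val = 2*m
    · rw [hA, show (2*m+1) % (2*m+1) = 0 from Nat.mod_self _,
        show (2*m+2) % (2*m+1) = 1 by
          rw [Nat.mod_eq_sub_mod (by omega)]
          simp [Nat.mod_eq_of_lt (show 1 < 2*m+1 by omega)]]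
      rw [edge_close m hm r, edge0 m hm r]
      intro s t hst
      have h0 : s * (0:ℝ) + t * 1 = 0 := congrArg (fun v : EuclideanSpace ℝ (Fin 3) => v 0) hst
      have h2 : s * (-(2*(m:ℝ)*r)) + t * r = 0 := congrArg (fun v : EuclideanSpace ℝ (Fin 3) => v 2) hst
      have ht : t = 0 := by linarith
      have hs : s * (2*(m:ℝ)*r) = 0 := by rw [ht] at h2; linarith
      rcases mul_eq_zero.mp hs with h|h
      · exact ⟨h, ht⟩
      · exfalso
        have hm' : (0:ℝ) < (m:ℝ) := by exact_mod_cast (by omega : 0 < m)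
        nlinarith
    · by_cases hB : i.val = 2*m-1
      · rw [hB, show (2*m-1+1) % (2*m+1) = 2*m by rw [Nat.mod_eq_of_lt (by omega)]; omega,
          show (2*m-1+2) % (2*m+1) = 0 by rw [show 2*m-1+2 = 2*m+1 by omega]; exact Nat.mod_self _]
        rw [show pv m r (2*m) - pv m r (2*m-1) = E3 (-1) (-r) r from edgeLast m hm r,
          edge_close m hm r]
        intro s t hst
        have h0 : s * (-1:ℝ) + t * 0 = 0 := congrArg (fun v : EuclideanSpace ℝ (Fin 3) => v 0) hst
        have h2 : s * r + t * (-(2*(m:ℝ)*r)) = 0 := congrArg (fun v : EuclideanSpace ℝ (Fin 3) => v 2) hst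
        have hs : s = 0 := by linarith
        have ht' : t * (2*(m:ℝ)*r) = 0 := by rw [hs] at h2; linarith
        rcases mul_eq_zero.mp ht' with h|h
        · exact ⟨hs, h⟩
        · exfalso
          have hm' : (0:ℝ) < (m:ℝ) := by exact_mod_cast (by omega : 0 < m)
          nlinarith
      · -- i.val ≤ 2m-2
        have haa : i.val ≤ 2*m-2 := by omega
        rw [Nat.mod_eq_of_lt (by omega : i.val + 1 < 2*m+1),
          Nat.mod_eq_of_lt (by omega : i.val + 2 < 2*m+1)]
        have hu := edge_eval m hm r i.val (by omega)
        have hw := edge_eval m hm r (i.val+1) (by omega)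
        rw [show i.val+1+1 = i.val+2 by omega] at hw
        simp only [show ¬ (i.val = 2*m-1) by omega, if_false, add_zero,
          show ¬ (i.val+1 = 0) by omega] at hu hw
        rcases Nat.mod_two_eq_zero_or_one i.val with hp|hp
        · rw [if_pos hp] at hu
          rw [if_neg (show ¬ ((i.val+1) % 2 = 0) by omega)] at hw
          rw [hu, hw]
          have key := indep_pm hr0 1 (if i.val = 0 then r else 0)
            ((if i.val+1 = 2*m-1 then -r else 0)) (Or.inl rfl)
          simpa using key
        · rw [if_neg (show ¬ (i.val % 2 = 0) by omega)] at hu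
          rw [if_pos (show (i.val+1) % 2 = 0 by omega)] at hw
          rw [hu, hw]
          have key := indep_pm hr0 (-1) (if i.val = 0 then r else 0)
            ((if i.val+1 = 2*m-1 then -r else 0)) (Or.inr rfl)
          rw [show -(-1:ℝ) = 1 by norm_num] at key
          simpa using key
  · -- non-consecutive edges are disjoint
    intro i j hij hij1 hij2
    show Disjoint (segment ℝ (pv m r i.val) (pv m r (i+1).val))
      (segment ℝ (pv m r j.val) (pv m r (j+1).val))
    rw [hval1 i, hval1 j]
    have ha := hvlt i
    have hb := hvlt j
    have hab : i.val ≠ j.val := by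
      intro h; exact hij (by rw [← hcastv i, ← hcastv j, h])
    have h1b : (i.val + 1) % (2*m+1) ≠ j.val := by
      intro h
      apply hij1
      have : i + 1 = (((i.val + 1) % (2*m+1) : ℕ) : ZMod (2*m+1)) := by
        rw [ZMod.natCast_mod]; push_cast; rw [hcastv i]
      rw [this, h, hcastv j]
    have h2b : (j.val + 1) % (2*m+1) ≠ i.val := by
      intro h
      apply hij2
      have : j + 1 = (((j.val + 1) % (2*m+1) : ℕ) : ZMod (2*m+1)) := by
        rw [ZMod.natCast_mod]; push_cast; rw [hcastv j]
      rw [this, h, hcastv i]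
    by_cases hA : i.val = 2*m
    · rw [hA, show (2*m+1) % (2*m+1) = 0 from Nat.mod_self _]
      have hb0 : j.val ≠ 0 := by
        intro h; apply h1b; rw [hA, h]; exact Nat.mod_self _
      have hbne : j.val ≠ 2*m := by omega
      have hb2 : (j.val + 1) % (2*m+1) = j.val + 1 := Nat.mod_eq_of_lt (by omega)
      have hble : j.val ≤ 2*m-2 := by
        rw [hb2] at h2b; omega
      rw [hb2]
      exact ydisj m hm r hr0 j.val (by omega) hble
    · by_cases hB : j.val = 2*m
      · rw [hB, show (2*m+1) % (2*m+1) = 0 from Nat.mod_self _]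
        have ha0 : i.val ≠ 0 := by
          intro h; apply h2b; rw [hB, h]; exact Nat.mod_self _
        have ha2 : (i.val + 1) % (2*m+1) = i.val + 1 := Nat.mod_eq_of_lt (by omega)
        have hale : i.val ≤ 2*m-2 := by
          rw [ha2] at h1b; omega
        rw [ha2]
        exact (ydisj m hm r hr0 i.val (by omega) hale).symm
      · rw [Nat.mod_eq_of_lt (show i.val + 1 < 2*m+1 by omega),
          Nat.mod_eq_of_lt (show j.val + 1 < 2*m+1 by omega)]
        rw [Nat.mod_eq_of_lt (show i.val + 1 < 2*m+1 by omega)] at h1b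
        rw [Nat.mod_eq_of_lt (show j.val + 1 < 2*m+1 by omega)] at h2b
        rcases lt_or_gt_of_ne hab with h|h
        · exact zdisj m r hr0 i.val j.val (by omega)
        · exact (zdisj m r hr0 j.val i.val (by omega)).symm
  · -- the total curvature bound
    have hsum : ∑ i : ZMod (2*m+1),
        angle (pv m r (i+1).val - pv m r i.val) (pv m r (i+2).val - pv m r (i+1).val)
        = ∑ a ∈ Finset.range (2*m+1), Gf m r a := by
      refine Finset.sum_nbij' (fun i : ZMod (2*m+1) => i.val) (fun a => (a : ZMod (2*m+1)))
        (fun i _ => Finset.mem_range.mpr (ZMod.val_lt i)) (fun a _ => Finset.mem_univ _)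
        (fun i _ => hcastv i) (fun a ha => ?_) (fun i _ => ?_)
      · rw [ZMod.val_natCast, Nat.mod_eq_of_lt (Finset.mem_range.mp ha)]
      · rw [Gf, hval1 i, hval2 i, Nat.mod_eq_of_lt (hvlt i)]
    rw [hsum]
    have hsplit : ∑ a ∈ Finset.range (2*m+1), Gf m r a
        = (∑ a ∈ Finset.range (2*m-1), Gf m r a) + Gf m r (2*m-1) + Gf m r (2*m) := by
      rw [show 2*m+1 = (2*m)+1 by omega, Finset.sum_range_succ,
        show 2*m = (2*m-1)+1 by omega, Finset.sum_range_succ]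
      rw [show 2*m-1+1 = 2*m by omega]
    rw [hsplit]
    -- bound the bulk terms
    have hbulk : ((2*m-1 : ℕ) : ℝ) * (π - c) ≤ ∑ a ∈ Finset.range (2*m-1), Gf m r a := by
      have h := Finset.card_nsmul_le_sum (Finset.range (2*m-1)) (Gf m r) (π - c) ?_
      · rwa [Finset.card_range, nsmul_eq_mul] at h
      · intro a ha'
        have haa : a ≤ 2*m-2 := by
          have := Finset.mem_range.mp ha'; omega
        rw [Gf, Nat.mod_eq_of_lt (show a < 2*m+1 by omega),
          Nat.mod_eq_of_lt (show a+1 < 2*m+1 by omega),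
          Nat.mod_eq_of_lt (show a+2 < 2*m+1 by omega)]
        exact angle_mid m hm hc0 hcπ hη_def hη0 hη1 hr2 hr0 a haa
    have hend1 : π/2 < Gf m r (2*m-1) := by
      rw [Gf, Nat.mod_eq_of_lt (show 2*m-1 < 2*m+1 by omega),
        show (2*m-1+1) % (2*m+1) = 2*m by rw [Nat.mod_eq_of_lt (by omega)]; omega,
        show (2*m-1+2) % (2*m+1) = 0 by rw [show 2*m-1+2 = 2*m+1 by omega]; exact Nat.mod_self _]
      exact angle_end1 m hm hr0
    have hend2 : π/2 < Gf m r (2*m) := by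
      rw [Gf, Nat.mod_eq_of_lt (show 2*m < 2*m+1 by omega),
        show (2*m+1) % (2*m+1) = 0 from Nat.mod_self _,
        show (2*m+2) % (2*m+1) = 1 by
          rw [Nat.mod_eq_sub_mod (by omega)]
          simp [Nat.mod_eq_of_lt (show 1 < 2*m+1 by omega)]]
      exact angle_end2 m hm hr0
    -- final arithmetic
    have hcardcast : ((2*m-1 : ℕ) : ℝ) = 2*(m:ℝ) - 1 := by
      rw [Nat.cast_sub (by omega)]; push_cast; ring
    rw [hcardcast] at hbulk
    have hM1 : (1:ℝ) ≤ (m:ℝ) := by exact_mod_cast (by omega : 1 ≤ m)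
    have hcc : 2*(m:ℝ)*c ≤ ε := by
      have h2m : (0:ℝ) < 2*(m:ℝ) := by linarith
      calc 2*(m:ℝ)*c ≤ 2*(m:ℝ) * (ε / (2*m)) := by
            apply mul_le_mul_of_nonneg_left hcε (by linarith)
        _ = ε := by field_simp
    nlinarith [hbulk, hend1, hend2, hc0, hM1]
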